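/- Let β > 0 and let ψ be a continuous probability density on ℝ with ψ(−s) = ψ(s) > 0 for all s ∈ ℝ and ψ nonincreasing on [0,∞). Let μ be a Borel probability measure on C([0,1],ℝ) such that for every d ∈ ℕ, all t₁,…,t_d ∈ [0,1] and all x₁,…,x_d ≤ 0 one has μ{ω : ω(t_j) ≤ x_j for 1 ≤ j ≤ d} = exp(−∫_ℝ max_{1≤j≤d}(|x_j| ψ(s − β t_j)) ds). Then for every bounded function f : [0,1] → (−∞,0] with at most finitely many discontinuities, μ{ω : ω(t) ≤ f(t) for all t ∈ [0,1]} = exp(−∫_ℝ sup_{t∈[0,1]}(|f(t)| ψ(s − β t)) ds). -/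

import Mathlib

open MeasureTheory ProbabilityTheory Filter Topology

noncomputable instance : MeasurableSpace C(Set.Icc (0:ℝ) 1, ℝ) := borel _

instance : BorelSpace C(Set.Icc (0:ℝ) 1, ℝ) := ⟨rfl⟩

/-- the functional distribution function of a standard extreme value
process is determined by its finite dimensional distributions. -/
theorem stmt0
    (β : ℝ) (hβ : 0 < β)
    (ψ : ℝ → ℝ) (hψcont : Continuous ψ) (hψpos : ∀ s, 0 < ψ s)
    (hψsymm : ∀ s, ψ (-s) = ψ s) (hψanti : AntitoneOn ψ (Set.Ici 0))
    (hψint : Integrable ψ) (hψprob : ∫ s, ψ s = 1)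
    (μ : Measure C(Set.Icc (0:ℝ) 1, ℝ)) [IsProbabilityMeasure μ]
    (hfidi : ∀ (d : ℕ) (t : Fin d → Set.Icc (0:ℝ) 1) (x : Fin d → ℝ), (∀ j, x j ≤ 0) →
      μ {ω | ∀ j, ω (t j) ≤ x j}
        = ENNReal.ofReal (Real.exp (-∫ s, ⨆ j, |x j| * ψ (s - β * (t j : ℝ)))))
    (f : Set.Icc (0:ℝ) 1 → ℝ)
    (hfbd : ∃ B, ∀ t, |f t| ≤ B)
    (hfnonpos : ∀ t, f t ≤ 0)
    (hfdisc : {t | ¬ ContinuousAt f t}.Finite) :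
    μ {ω | ∀ t, ω t ≤ f t}
      = ENNReal.ofReal
          (Real.exp (-∫ s, ⨆ t : Set.Icc (0:ℝ) 1, |f t| * ψ (s - β * (t : ℝ)))) := by
  classical
  obtain ⟨B, hB⟩ := hfbd
  have ht₀ : (0:ℝ) ∈ Set.Icc (0:ℝ) 1 := by norm_num
  set t₀ : Set.Icc (0:ℝ) 1 := ⟨0, ht₀⟩ with ht₀def
  haveI : Nonempty (Set.Icc (0:ℝ) 1) := ⟨t₀⟩
  have hB0 : 0 ≤ B := (abs_nonneg _).trans (hB t₀)
  have hψnn : ∀ x, 0 ≤ ψ x := fun x => (hψpos x).le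
  have hψ0 : ∀ x, ψ x ≤ ψ 0 := by
    intro x
    rcases le_or_gt 0 x with h | h
    · exact hψanti (Set.mem_Ici.2 le_rfl) (Set.mem_Ici.2 h) h
    · have : ψ x = ψ (-x) := by rw [← hψsymm x]
      rw [this]
      exact hψanti (Set.mem_Ici.2 le_rfl) (Set.mem_Ici.2 (by linarith)) (by linarith)
  -- dominating integrable function
  set M : ℝ → ℝ := fun s =>
    ψ s + ψ (s - β) + Set.indicator (Set.Icc 0 β) (fun _ => ψ 0) s with hMdef
  have hMnn : ∀ s, 0 ≤ M s := by
    intro s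
    have : 0 ≤ Set.indicator (Set.Icc 0 β) (fun _ => ψ 0) s :=
      Set.indicator_nonneg (fun _ _ => hψnn 0) s
    have h1 := hψnn s; have h2 := hψnn (s - β)
    simp only [hMdef]; linarith
  have hMint : Integrable M := by
    refine (hψint.add (hψint.comp_sub_right β)).add ?_
    rw [integrable_indicator_iff measurableSet_Icc]
    exact integrableOn_const measure_Icc_lt_top.ne
  have hMbound : ∀ (t : Set.Icc (0:ℝ) 1) (s : ℝ), ψ (s - β * t) ≤ M s := by
    intro t s
    have ht0 : (0:ℝ) ≤ t := t.2.1
    have ht1 : (t:ℝ) ≤ 1 := t.2.2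
    have hind : 0 ≤ Set.indicator (Set.Icc 0 β) (fun _ => ψ 0) s :=
      Set.indicator_nonneg (fun _ _ => hψnn 0) s
    rcases le_or_gt s 0 with hs | hs
    · have h1 : ψ (s - β * t) = ψ (β * t - s) := by
        rw [← hψsymm (β * t - s)]; ring_nf
      have h2 : ψ (β * t - s) ≤ ψ (-s) := by
        refine hψanti (Set.mem_Ici.2 (by linarith)) (Set.mem_Ici.2 ?_) ?_
        · nlinarith
        · nlinarith
      have h3 : ψ (-s) = ψ s := hψsymm s
      have h4 := hψnn (s - β)
      simp only [hMdef]; linarith [h1 ▸ (h3 ▸ h2)]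
    · rcases le_or_gt β s with hs' | hs'
      · have h2 : ψ (s - β * t) ≤ ψ (s - β) := by
          refine hψanti (Set.mem_Ici.2 (by linarith)) (Set.mem_Ici.2 ?_) ?_
          · nlinarith
          · nlinarith
        have h4 := hψnn s
        simp only [hMdef]; linarith
      · have hmem : s ∈ Set.Icc (0:ℝ) β := ⟨hs.le, hs'.le⟩
        have h2 : Set.indicator (Set.Icc 0 β) (fun _ => ψ 0) s = ψ 0 :=
          Set.indicator_of_mem hmem _
        have h4 := hψnn s; have h5 := hψnn (s - β)
        have h6 := hψ0 (s - β * t)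
        simp only [hMdef]; linarith
  have hbound : ∀ (t : Set.Icc (0:ℝ) 1) (s : ℝ), |f t| * ψ (s - β * t) ≤ B * M s :=
    fun t s => mul_le_mul (hB t) (hMbound t s) (hψnn _) hB0
  -- a countable dense set containing all discontinuity points of f
  obtain ⟨S, hScount, hSdense⟩ := TopologicalSpace.exists_countable_dense (Set.Icc (0:ℝ) 1)
  set D : Set (Set.Icc (0:ℝ) 1) := S ∪ {t | ¬ ContinuousAt f t} with hDdef
  have hDcount : D.Countable := hScount.union hfdisc.countable
  have hDdense : Dense D := hSdense.mono Set.subset_union_left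
  obtain ⟨e, he⟩ := hDcount.exists_eq_range hDdense.nonempty
  -- the functions
  set g : ℕ → ℝ → ℝ := fun k s => |f (e k)| * ψ (s - β * (e k : ℝ)) with hgdef
  set G : ℝ → ℝ := fun s => ⨆ t : Set.Icc (0:ℝ) 1, |f t| * ψ (s - β * (t : ℝ)) with hGdef
  set F : ℕ → ℝ → ℝ := fun n s => ⨆ j : Fin (n + 1), g j s with hFdef
  have hgnn : ∀ (k : ℕ) (s : ℝ), 0 ≤ g k s := fun k s => mul_nonneg (abs_nonneg _) (hψnn _)
  have hbddT : ∀ s : ℝ,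
      BddAbove (Set.range fun t : Set.Icc (0:ℝ) 1 => |f t| * ψ (s - β * (t:ℝ))) :=
    fun s => ⟨B * M s, by rintro _ ⟨t, rfl⟩; exact hbound t s⟩
  have hbddK : ∀ s : ℝ, BddAbove (Set.range fun k : ℕ => g k s) :=
    fun s => ⟨B * M s, by rintro _ ⟨k, rfl⟩; exact hbound (e k) s⟩
  have hbddF : ∀ (n : ℕ) (s : ℝ), BddAbove (Set.range fun j : Fin (n+1) => g j s) :=
    fun n s => (Set.finite_range _).bddAbove
  have hcontT : ∀ (s : ℝ) (t : Set.Icc (0:ℝ) 1), ContinuousAt f t →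
      ContinuousAt (fun u : Set.Icc (0:ℝ) 1 => |f u| * ψ (s - β * (u:ℝ))) t := by
    intro s t ht
    exact ht.abs.mul ((hψcont.comp
      (continuous_const.sub (continuous_const.mul continuous_subtype_val))).continuousAt)
  have hnotD : ∀ t : Set.Icc (0:ℝ) 1, t ∉ D → ContinuousAt f t := by
    intro t ht
    by_contra h
    exact ht (Or.inr h)
  have hseq : ∀ t : Set.Icc (0:ℝ) 1, ∃ u : ℕ → Set.Icc (0:ℝ) 1,
      (∀ n, u n ∈ D) ∧ Tendsto u atTop (𝓝 t) :=
    fun t => mem_closure_iff_seq_limit.mp (hDdense t)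
  -- sup over all t equals sup over the countable set
  have hGK : ∀ s : ℝ, G s = ⨆ k : ℕ, g k s := by
    intro s
    apply le_antisymm
    · refine ciSup_le fun t => ?_
      by_cases ht : t ∈ D
      · rw [he] at ht
        obtain ⟨k, rfl⟩ := ht
        exact le_ciSup (hbddK s) k
      · obtain ⟨u, huD, hu⟩ := hseq t
        have h1 : Tendsto (fun n => |f (u n)| * ψ (s - β * (u n : ℝ))) atTop
            (𝓝 (|f t| * ψ (s - β * (t:ℝ)))) :=
          ((hcontT s t (hnotD t ht)).tendsto).comp hu
        refine le_of_tendsto h1 (Eventually.of_forall fun n => ?_)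
        have : u n ∈ Set.range e := he ▸ huD n
        obtain ⟨k, hk⟩ := this
        rw [← hk]
        exact le_ciSup (hbddK s) k
    · exact ciSup_le fun k => le_ciSup (hbddT s) (e k)
  have hFmono : ∀ s : ℝ, Monotone fun n => F n s := by
    intro s m n hmn
    exact ciSup_le fun j => le_ciSup (hbddF n s) (Fin.castLE (by omega) j)
  have hFle : ∀ (n : ℕ) (s : ℝ), F n s ≤ B * M s :=
    fun n s => ciSup_le fun j => hbound (e j) s
  have hFnn : ∀ (n : ℕ) (s : ℝ), 0 ≤ F n s :=
    fun n s => (hgnn 0 s).trans (le_ciSup (hbddF n s) 0)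
  have hbddFn : ∀ s : ℝ, BddAbove (Set.range fun n : ℕ => F n s) :=
    fun s => ⟨B * M s, by rintro _ ⟨n, rfl⟩; exact hFle n s⟩
  have hsupF : ∀ s : ℝ, (⨆ n : ℕ, F n s) = ⨆ k : ℕ, g k s := by
    intro s
    apply le_antisymm
    · exact ciSup_le fun n => ciSup_le fun j => le_ciSup (hbddK s) (j : ℕ)
    · refine ciSup_le fun k => ?_
      calc g k s ≤ F k s := le_ciSup (hbddF k s) ⟨k, Nat.lt_succ_self k⟩
        _ ≤ ⨆ n : ℕ, F n s := le_ciSup (hbddFn s) k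
  have hFtendsto : ∀ s : ℝ, Tendsto (fun n => F n s) atTop (𝓝 (G s)) := by
    intro s
    rw [hGK s, ← hsupF s]
    exact tendsto_atTop_ciSup (hFmono s) (hbddFn s)
  -- continuity / integrability
  have hgcont : ∀ k : ℕ, Continuous (g k) := fun k =>
    continuous_const.mul (hψcont.comp (continuous_id.sub continuous_const))
  have hFcont : ∀ n : ℕ, Continuous (F n) := by
    intro n
    have hrw : F n = fun s =>
        Finset.univ.sup' Finset.univ_nonempty (fun j : Fin (n+1) => g j s) :=
      funext fun s => (Finset.sup'_univ_eq_ciSup _).symm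
    rw [hrw]
    exact Continuous.finset_sup'_apply Finset.univ_nonempty fun j _ => hgcont j
  have hFint : ∀ n : ℕ, Integrable (F n) := by
    intro n
    refine Integrable.mono' (hMint.const_mul B) (hFcont n).aestronglyMeasurable
      (Eventually.of_forall fun s => ?_)
    rw [Real.norm_eq_abs, abs_of_nonneg (hFnn n s)]
    exact hFle n s
  have hGsm : AEStronglyMeasurable G (volume : Measure ℝ) :=
    aestronglyMeasurable_of_tendsto_ae atTop
      (fun n => (hFcont n).aestronglyMeasurable)
      (Eventually.of_forall hFtendsto)
  have hGnn : ∀ s : ℝ, 0 ≤ G s :=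
    fun s => (mul_nonneg (abs_nonneg _) (hψnn _)).trans (le_ciSup (hbddT s) t₀)
  have hGle : ∀ s : ℝ, G s ≤ B * M s := fun s => ciSup_le fun t => hbound t s
  have hGint : Integrable G := by
    refine Integrable.mono' (hMint.const_mul B) hGsm (Eventually.of_forall fun s => ?_)
    rw [Real.norm_eq_abs, abs_of_nonneg (hGnn s)]
    exact hGle s
  have hInt_tendsto : Tendsto (fun n => ∫ s, F n s) atTop (𝓝 (∫ s, G s)) :=
    integral_tendsto_of_tendsto_of_monotone hFint hGint
      (Eventually.of_forall hFmono) (Eventually.of_forall hFtendsto)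
  -- the sets
  set A : ℕ → Set C(Set.Icc (0:ℝ) 1, ℝ) :=
    fun n => {ω | ∀ j : Fin (n+1), ω (e j) ≤ f (e j)} with hAdef
  have hAmeas : ∀ n, MeasurableSet (A n) := by
    intro n
    have : A n = ⋂ j : Fin (n+1), {ω : C(Set.Icc (0:ℝ) 1, ℝ) | ω (e j) ≤ f (e j)} := by
      ext ω; simp [hAdef, Set.mem_iInter]
    rw [this]
    exact MeasurableSet.iInter fun j =>
      (isClosed_le (continuous_eval_const (e j)) continuous_const).measurableSet
  have hAanti : Antitone A := by
    intro m n hmn ω hω j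
    exact hω (Fin.castLE (by omega) j)
  have hA_fidi : ∀ n, μ (A n) = ENNReal.ofReal (Real.exp (-∫ s, F n s)) := by
    intro n
    exact hfidi (n+1) (fun j => e j) (fun j => f (e j)) (fun j => hfnonpos _)
  have hInterEq : ⋂ n, A n = {ω : C(Set.Icc (0:ℝ) 1, ℝ) | ∀ t, ω t ≤ f t} := by
    ext ω
    simp only [Set.mem_iInter, Set.mem_setOf_eq]
    constructor
    · intro hω t
      have hk : ∀ k : ℕ, ω (e k) ≤ f (e k) := fun k => hω k ⟨k, Nat.lt_succ_self k⟩
      by_cases ht : t ∈ D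
      · rw [he] at ht
        obtain ⟨k, rfl⟩ := ht
        exact hk k
      · obtain ⟨u, huD, hu⟩ := hseq t
        refine le_of_tendsto_of_tendsto'
          ((ω.continuous.continuousAt.tendsto).comp hu)
          (((hnotD t ht).tendsto).comp hu) (fun n => ?_)
        have : u n ∈ Set.range e := he ▸ huD n
        obtain ⟨k, hk'⟩ := this
        rw [Function.comp_apply, Function.comp_apply, ← hk']
        exact hk k
    · intro hω n j
      exact hω (e j)
  -- continuity from above
  have h1 : Tendsto (fun n => μ (A n)) atTop (𝓝 (μ (⋂ n, A n))) :=
    tendsto_measure_iInter_atTop (fun n => (hAmeas n).nullMeasurableSet) hAanti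
      ⟨0, (measure_lt_top μ _).ne⟩
  have h2 : Tendsto (fun n => μ (A n)) atTop
      (𝓝 (ENNReal.ofReal (Real.exp (-∫ s, G s)))) := by
    have hrw : (fun n => μ (A n))
        = fun n => ENNReal.ofReal (Real.exp (-∫ s, F n s)) := funext hA_fidi
    rw [hrw]
    exact (ENNReal.continuous_ofReal.tendsto _).comp
      ((Real.continuous_exp.tendsto _).comp hInt_tendsto.neg)
  have hkey := tendsto_nhds_unique h1 h2
  rw [hInterEq] at hkey
  exact hkey
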